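/- Let X be a generalized quadratic set of type (SC) of Q⁺(5,q), q even, satisfying properties (1) and (2), with A₁ and A₂ as defined. Then no two points of A₁ ∪ A₂ lie in a common plane of Q⁺(5,q); in particular no two are collinear on the quadric, and A₁ ∪ A₂ is an ovoid of Q⁺(5,q) (meets every plane of the quadric in exactly one point). -/

import Mathlib

/-- An abstract model of the point-line-plane geometry of the Klein quadric
`Q⁺(5,q)`: points, lines and planes (all lines and planes being fully
contained in the quadric), where every plane with its lines is a projective
plane of order `q`, every line lies in a plane, there are `2(q+1)(q²+1)`
planes and every point lies on exactly `2(q+1)` planes. -/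
structure KleinGeom (q : ℕ) where
  P : Type
  fin : Fintype P
  lines : Set (Set P)
  planes : Set (Set P)
  line_card : ∀ L ∈ lines, L.ncard = q + 1
  line_in_plane : ∀ L ∈ lines, ∃ π ∈ planes, L ⊆ π
  plane_card : ∀ π ∈ planes, π.ncard = q ^ 2 + q + 1
  plane_two_points : ∀ π ∈ planes, ∀ x ∈ π, ∀ y ∈ π, x ≠ y →
    ∃! L, L ∈ lines ∧ L ⊆ π ∧ x ∈ L ∧ y ∈ L
  plane_point_lines : ∀ π ∈ planes, ∀ x ∈ π,
    {L | L ∈ lines ∧ L ⊆ π ∧ x ∈ L}.ncard = q + 1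
  planes_card : planes.ncard = 2 * (q + 1) * (q ^ 2 + 1)
  point_planes : ∀ x : P, {π | π ∈ planes ∧ x ∈ π}.ncard = 2 * (q + 1)

variable {q : ℕ}

/-- An oval of the plane `π`: `q+1` points of `π`, no three collinear. -/
def KleinGeom.IsOval (G : KleinGeom q) (π O : Set G.P) : Prop :=
  O ⊆ π ∧ O.ncard = q + 1 ∧
    ∀ L ∈ G.lines, L ⊆ π → (L ∩ O).ncard ≤ 2

/-- `k` is the kernel (nucleus) of the oval `O` of the plane `π`: every line
of `π` through `k` meets `O` in exactly one point. -/
def KleinGeom.IsKernel (G : KleinGeom q) (π O : Set G.P) (k : G.P) : Prop :=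
  k ∈ π ∧ k ∉ O ∧ ∀ L ∈ G.lines, L ⊆ π → k ∈ L → (L ∩ O).ncard = 1

/-- A generalized quadratic set of type (SC): a point set meeting each plane
in a single point (type (S)) or an oval (type (C)), both types occurring. -/
def KleinGeom.IsGQS (G : KleinGeom q) (X : Set G.P) : Prop :=
  (∀ π ∈ G.planes, (X ∩ π).ncard = 1 ∨ G.IsOval π (X ∩ π)) ∧
    (∃ π ∈ G.planes, (X ∩ π).ncard = 1) ∧
    (∃ π ∈ G.planes, G.IsOval π (X ∩ π))

/-- `A₁`: the points of `X` lying in some plane of type (S). -/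
def KleinGeom.A1 (G : KleinGeom q) (X : Set G.P) : Set G.P :=
  {x | x ∈ X ∧ ∃ π ∈ G.planes, x ∈ π ∧ (X ∩ π).ncard = 1}

/-- `A₂`: the kernels of the oval sections `π ∩ X` over type-(C) planes. -/
def KleinGeom.A2 (G : KleinGeom q) (X : Set G.P) : Set G.P :=
  {k | ∃ π ∈ G.planes, G.IsOval π (X ∩ π) ∧ G.IsKernel π (X ∩ π) k}

/-- Property (1): every plane through a point of `A₁` has type (S). -/
def KleinGeom.Prop1 (G : KleinGeom q) (X : Set G.P) : Prop :=
  ∀ π ∈ G.planes, ∀ x ∈ G.A1 X, x ∈ π → (X ∩ π).ncard = 1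

/-- Property (2): every plane through a point `x ∈ A₂` has type (C) and `x`
is the kernel of its oval section. -/
def KleinGeom.Prop2 (G : KleinGeom q) (X : Set G.P) : Prop :=
  ∀ π ∈ G.planes, ∀ x ∈ G.A2 X, x ∈ π →
    G.IsOval π (X ∩ π) ∧ G.IsKernel π (X ∩ π) x

namespace KleinGeom

variable {G : KleinGeom q} {π O L M : Set G.P} {x y p k : G.P}

/-- The pencil of lines of the plane `π` through `x`. -/
def pencil (G : KleinGeom q) (π : Set G.P) (x : G.P) : Set (Set G.P) :=
  {L | L ∈ G.lines ∧ L ⊆ π ∧ x ∈ L}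

/-- The number of tangent lines to `O` in `π` through `x`. -/
noncomputable def tcount (G : KleinGeom q) (π O : Set G.P) (x : G.P) : ℕ :=
  {L | L ∈ G.pencil π x ∧ (L ∩ O).ncard = 1}.ncard

lemma pencil_ncard (hπ : π ∈ G.planes) (hx : x ∈ π) :
    (G.pencil π x).ncard = q + 1 := G.plane_point_lines π hπ x hx

lemma line_thru (hπ : π ∈ G.planes) (hx : x ∈ π) (hy : y ∈ π) (hxy : x ≠ y) :
    ∃ L, (L ∈ G.lines ∧ L ⊆ π ∧ x ∈ L ∧ y ∈ L) ∧
      ∀ L', L' ∈ G.lines → L' ⊆ π → x ∈ L' → y ∈ L' → L' = L := by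
  obtain ⟨L, hL, hu⟩ := G.plane_two_points π hπ x hx y hy hxy
  exact ⟨L, hL, fun L' h1 h2 h3 h4 => hu L' ⟨h1, h2, h3, h4⟩⟩

lemma line_eq_of_two (hπ : π ∈ G.planes) (hL : L ∈ G.lines) (hLπ : L ⊆ π)
    (hM : M ∈ G.lines) (hMπ : M ⊆ π) (hxy : x ≠ y)
    (hxL : x ∈ L) (hyL : y ∈ L) (hxM : x ∈ M) (hyM : y ∈ M) : L = M := by
  obtain ⟨K, _, hu⟩ := line_thru hπ (hLπ hxL) (hLπ hyL) hxy
  rw [hu L hL hLπ hxL hyL, hu M hM hMπ hxM hyM]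

lemma sum_pencil [Finite G.P] (hπ : π ∈ G.planes) (hx : x ∈ π)
    {S : Set G.P} (hS : S ⊆ π) (hxS : x ∉ S) :
    ∑ L ∈ (Set.toFinite (G.pencil π x)).toFinset, (L ∩ S).ncard = S.ncard := by
  classical
  have key : ∀ y ∈ S, ∃ L, (L ∈ G.lines ∧ L ⊆ π ∧ x ∈ L ∧ y ∈ L) ∧
      ∀ L', L' ∈ G.lines → L' ⊆ π → x ∈ L' → y ∈ L' → L' = L := by
    intro y hy
    exact line_thru hπ hx (hS hy) (by rintro rfl; exact hxS hy)
  set f : G.P → Set G.P := fun y => if h : y ∈ S then (key y h).choose else ∅ with hf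
  have hfmem : ∀ y (h : y ∈ S), f y ∈ G.lines ∧ f y ⊆ π ∧ x ∈ f y ∧ y ∈ f y := by
    intro y h; simp only [hf, dif_pos h]; exact (key y h).choose_spec.1
  have hfu : ∀ y (h : y ∈ S), ∀ L', L' ∈ G.lines → L' ⊆ π → x ∈ L' → y ∈ L' → L' = f y := by
    intro y h; simp only [hf, dif_pos h]; exact (key y h).choose_spec.2
  have hmem : ∀ y ∈ (Set.toFinite S).toFinset, f y ∈ (Set.toFinite (G.pencil π x)).toFinset := by
    intro y hy
    rw [Set.Finite.mem_toFinset] at hy ⊢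
    obtain ⟨h1, h2, h3, _⟩ := hfmem y hy
    exact ⟨h1, h2, h3⟩
  have hcard := Finset.card_eq_sum_card_fiberwise hmem
  rw [← Set.ncard_eq_toFinset_card] at hcard
  rw [hcard]
  apply Finset.sum_congr rfl
  intro L hLt
  rw [Set.Finite.mem_toFinset] at hLt
  obtain ⟨hL, hLπ, hxL⟩ := hLt
  rw [Set.ncard_eq_toFinset_card (L ∩ S)]
  congr 1
  ext y
  simp only [Finset.mem_filter, Set.Finite.mem_toFinset, Set.mem_inter_iff]
  constructor
  · rintro ⟨hyL, hyS⟩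
    exact ⟨hyS, (hfu y hyS L hL hLπ hxL hyL).symm⟩
  · rintro ⟨hyS, h⟩
    exact ⟨h ▸ (hfmem y hyS).2.2.2, hyS⟩

lemma tangent_exists_unique [Finite G.P] (hπ : π ∈ G.planes) (hO : G.IsOval π O)
    (hp : p ∈ O) :
    ∃ T, (T ∈ G.lines ∧ T ⊆ π ∧ T ∩ O = {p}) ∧
      ∀ T', T' ∈ G.lines → T' ⊆ π → T' ∩ O = {p} → T' = T := by
  classical
  obtain ⟨hOπ, hOcard, harc⟩ := hO
  have hpπ : p ∈ π := hOπ hp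
  set t := (Set.toFinite (G.pencil π p)).toFinset with htdef
  have htcard : t.card = q + 1 := by
    rw [htdef, ← Set.ncard_eq_toFinset_card]; exact pencil_ncard hπ hpπ
  have hsum : ∑ L ∈ t, (L ∩ (O \ {p})).ncard = q := by
    rw [sum_pencil hπ hpπ (fun y hy => hOπ hy.1) (by simp)]
    rw [Set.ncard_diff_singleton_of_mem hp, hOcard]
    omega
  have hle : ∀ L ∈ t, (L ∩ (O \ {p})).ncard ≤ 1 := by
    intro L hL
    rw [Set.Finite.mem_toFinset] at hL
    obtain ⟨h1, h2, h3⟩ := hL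
    have h4 : L ∩ (O \ {p}) = (L ∩ O) \ {p} := by ext z; simp; tauto
    have h5 : p ∈ L ∩ O := ⟨h3, hp⟩
    have := harc L h1 h2
    have := Set.ncard_diff_singleton_of_mem h5
    rw [h4, this]; omega
  -- exactly one line in the pencil misses O \ {p}
  have hsplit : (t.filter (fun L => (L ∩ (O \ {p})).ncard = 0)).card
      + (t.filter (fun L => ¬ (L ∩ (O \ {p})).ncard = 0)).card = t.card :=
    Finset.card_filter_add_card_filter_not _
  have hsum2 : ∑ L ∈ t, (L ∩ (O \ {p})).ncard
      = (t.filter (fun L => ¬ (L ∩ (O \ {p})).ncard = 0)).card := by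
    rw [← Finset.sum_filter_add_sum_filter_not t (fun L => (L ∩ (O \ {p})).ncard = 0)]
    rw [Finset.sum_congr rfl (fun L hL => (Finset.mem_filter.mp hL).2), Finset.sum_const,
      smul_zero, zero_add]
    rw [Finset.card_eq_sum_ones]
    apply Finset.sum_congr rfl
    intro L hL
    rw [Finset.mem_filter] at hL
    have := hle L hL.1
    omega
  have hone : (t.filter (fun L => (L ∩ (O \ {p})).ncard = 0)).card = 1 := by omega
  obtain ⟨T, hT⟩ := Finset.card_eq_one.mp hone
  have hTmem : T ∈ t ∧ (T ∩ (O \ {p})).ncard = 0 := by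
    have : T ∈ t.filter (fun L => (L ∩ (O \ {p})).ncard = 0) := by rw [hT]; simp
    exact Finset.mem_filter.mp this
  have hTprops : T ∈ G.lines ∧ T ⊆ π ∧ p ∈ T := by
    have := hTmem.1; rw [Set.Finite.mem_toFinset] at this; exact this
  have hTO : T ∩ O = {p} := by
    have hempty : T ∩ (O \ {p}) = ∅ :=
      (Set.ncard_eq_zero (Set.toFinite _)).mp hTmem.2
    apply Set.eq_singleton_iff_unique_mem.mpr
    refine ⟨⟨hTprops.2.2, hp⟩, ?_⟩
    intro z hz
    by_contra hzp
    have : z ∈ T ∩ (O \ {p}) := ⟨hz.1, hz.2, hzp⟩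
    rw [hempty] at this
    exact this
  refine ⟨T, ⟨hTprops.1, hTprops.2.1, hTO⟩, ?_⟩
  intro T' h1 h2 h3
  have hpT' : p ∈ T' := by
    have : p ∈ T' ∩ O := h3 ▸ Set.mem_singleton p
    exact this.1
  have : T' ∈ t.filter (fun L => (L ∩ (O \ {p})).ncard = 0) := by
    rw [Finset.mem_filter, Set.Finite.mem_toFinset]
    refine ⟨⟨h1, h2, hpT'⟩, ?_⟩
    have : T' ∩ (O \ {p}) = ∅ := by
      ext z
      simp only [Set.mem_inter_iff, Set.mem_diff, Set.mem_singleton_iff, Set.mem_empty_iff_false,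
        iff_false]
      rintro ⟨hzT, hzO, hzp⟩
      exact hzp (by have : z ∈ T' ∩ O := ⟨hzT, hzO⟩; rwa [h3] at this)
    rw [this, Set.ncard_empty]
  rw [hT, Finset.mem_singleton] at this
  exact this

lemma lines_meet [Finite G.P] (hπ : π ∈ G.planes)
    (hL : L ∈ G.lines) (hLπ : L ⊆ π) (hM : M ∈ G.lines) (hMπ : M ⊆ π) (hne : L ≠ M) :
    ∃ z, L ∩ M = {z} := by
  classical
  have huniq : ∀ z w, z ∈ L ∩ M → w ∈ L ∩ M → z = w := by
    intro z w hz hw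
    by_contra hzw
    exact hne (line_eq_of_two hπ hL hLπ hM hMπ hzw hz.1 hw.1 hz.2 hw.2)
  rcases Set.eq_empty_or_nonempty (L ∩ M) with hem | ⟨z, hz⟩
  · exfalso
    -- L and M disjoint: derive a contradiction by counting the pencil at a point of M
    have hMne : M.Nonempty := by
      apply Set.nonempty_of_ncard_ne_zero
      rw [G.line_card M hM]; omega
    obtain ⟨x, hxM⟩ := hMne
    have hxπ : x ∈ π := hMπ hxM
    have hxL : x ∉ L := fun h => by
      have : x ∈ L ∩ M := ⟨h, hxM⟩
      rw [hem] at this; exact this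
    have key : ∀ y ∈ L, ∃ K, (K ∈ G.lines ∧ K ⊆ π ∧ x ∈ K ∧ y ∈ K) ∧
        ∀ K', K' ∈ G.lines → K' ⊆ π → x ∈ K' → y ∈ K' → K' = K := by
      intro y hy
      exact line_thru hπ hxπ (hLπ hy) (by rintro rfl; exact hxL hy)
    set f : G.P → Set G.P := fun y => if h : y ∈ L then (key y h).choose else ∅ with hf
    have hfmem : ∀ y (h : y ∈ L), f y ∈ G.lines ∧ f y ⊆ π ∧ x ∈ f y ∧ y ∈ f y := by
      intro y h; simp only [hf, dif_pos h]; exact (key y h).choose_spec.1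
    have hfu : ∀ y (h : y ∈ L), ∀ K', K' ∈ G.lines → K' ⊆ π → x ∈ K' → y ∈ K' → K' = f y := by
      intro y h; simp only [hf, dif_pos h]; exact (key y h).choose_spec.2
    have hinj : Set.InjOn f L := by
      intro y1 h1 y2 h2 heq
      by_contra hy12
      have hK := hfmem y1 h1
      have hy2K : y2 ∈ f y1 := heq ▸ (hfmem y2 h2).2.2.2
      have : f y1 = L := line_eq_of_two hπ hK.1 hK.2.1 hL hLπ hy12 hK.2.2.2 hy2K h1 h2
      exact hxL (this ▸ hK.2.2.1)
    have hsub : f '' L ⊆ G.pencil π x := by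
      rintro K ⟨y, hy, rfl⟩
      obtain ⟨a, b, c, _⟩ := hfmem y hy
      exact ⟨a, b, c⟩
    have himgcard : (f '' L).ncard = q + 1 := by
      rw [Set.ncard_image_of_injOn hinj, G.line_card L hL]
    have heq : f '' L = G.pencil π x := by
      apply Set.eq_of_subset_of_ncard_le hsub
      rw [himgcard, pencil_ncard hπ hxπ]
    have hMpen : M ∈ G.pencil π x := ⟨hM, hMπ, hxM⟩
    rw [← heq] at hMpen
    obtain ⟨y, hyL, hyM⟩ := hMpen
    have : y ∈ L ∩ M := ⟨hyL, hyM ▸ (hfmem y hyL).2.2.2⟩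
    rw [hem] at this; exact this
  · exact ⟨z, Set.eq_singleton_iff_unique_mem.mpr ⟨hz, fun w hw => huniq w z hw hz⟩⟩

lemma tcount_eq_filter [Finite G.P] :
    G.tcount π O x
      = ((Set.toFinite (G.pencil π x)).toFinset.filter (fun L => (L ∩ O).ncard = 1)).card := by
  classical
  rw [tcount, Set.ncard_eq_toFinset_card]
  congr 1
  ext L
  simp [Set.Finite.mem_toFinset]

lemma tangents_odd [Finite G.P] (hq : Even q) (hπ : π ∈ G.planes) (hO : G.IsOval π O)
    (hx : x ∈ π) (hxO : x ∉ O) : Odd (G.tcount π O x) := by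
  classical
  obtain ⟨hOπ, hOcard, harc⟩ := hO
  set t := (Set.toFinite (G.pencil π x)).toFinset with htdef
  have hsum : ∑ L ∈ t, (L ∩ O).ncard = q + 1 := by
    rw [sum_pencil hπ hx hOπ hxO, hOcard]
  have hmod : (∑ L ∈ t, (L ∩ O).ncard) % 2
      = (∑ L ∈ t, (L ∩ O).ncard % 2) % 2 := Finset.sum_nat_mod t 2 _
  have hterm : ∀ L ∈ t, (L ∩ O).ncard % 2 = if (L ∩ O).ncard = 1 then 1 else 0 := by
    intro L hLt
    rw [Set.Finite.mem_toFinset] at hLt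
    have := harc L hLt.1 hLt.2.1
    interval_cases h : (L ∩ O).ncard <;> simp
  have hsum2 : ∑ L ∈ t, (L ∩ O).ncard % 2
      = (t.filter (fun L => (L ∩ O).ncard = 1)).card := by
    rw [Finset.sum_congr rfl hterm, Finset.sum_boole]
    simp
  rw [tcount_eq_filter, ← htdef]
  have : (t.filter (fun L => (L ∩ O).ncard = 1)).card % 2 = 1 := by
    rw [← hsum2, ← hmod, hsum]
    obtain ⟨m, hm⟩ := hq
    omega
  exact Nat.odd_iff.mpr this

lemma tcount_secant [Finite G.P] (hq : Even q) (hq2 : 2 ≤ q) (hπ : π ∈ G.planes)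
    (hO : G.IsOval π O) (hL : L ∈ G.lines) (hLπ : L ⊆ π) (hsec : (L ∩ O).ncard = 2)
    (hx : x ∈ L) (hxO : x ∉ O) : G.tcount π O x = 1 := by
  classical
  obtain ⟨hOπ, hOcard, harc⟩ := hO
  obtain ⟨a, b, hab, hLO⟩ := Set.ncard_eq_two.mp hsec
  have haLO : a ∈ L ∩ O := by rw [hLO]; simp
  have hbLO : b ∈ L ∩ O := by rw [hLO]; simp
  -- tangent lines
  have tang : ∀ p ∈ O, ∃ T, (T ∈ G.lines ∧ T ⊆ π ∧ T ∩ O = {p}) ∧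
      ∀ T', T' ∈ G.lines → T' ⊆ π → T' ∩ O = {p} → T' = T :=
    fun p hp => tangent_exists_unique hπ ⟨hOπ, hOcard, harc⟩ hp
  set Tl : G.P → Set G.P := fun p => if h : p ∈ O then (tang p h).choose else ∅ with hTldef
  have hT1 : ∀ p (h : p ∈ O), Tl p ∈ G.lines ∧ Tl p ⊆ π ∧ Tl p ∩ O = {p} := by
    intro p h; simp only [hTldef, dif_pos h]; exact (tang p h).choose_spec.1
  have hTu : ∀ p (h : p ∈ O), ∀ T', T' ∈ G.lines → T' ⊆ π → T' ∩ O = {p} → T' = Tl p := by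
    intro p h; simp only [hTldef, dif_pos h]; exact (tang p h).choose_spec.2
  have hpT : ∀ p (h : p ∈ O), p ∈ Tl p := by
    intro p h
    have : p ∈ Tl p ∩ O := (hT1 p h).2.2 ▸ Set.mem_singleton p
    exact this.1
  -- counting formula for the number of tangents through an external point
  set u := (Set.toFinite O).toFinset with hudef
  have hform : ∀ y, y ∉ O → G.tcount π O y = (u.filter (fun p => y ∈ Tl p)).card := by
    intro y hyO
    have himg : {K | K ∈ G.pencil π y ∧ (K ∩ O).ncard = 1} = Tl '' {p | p ∈ O ∧ y ∈ Tl p} := by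
      ext K
      constructor
      · rintro ⟨⟨hK1, hK2, hK3⟩, hK4⟩
        obtain ⟨p, hp⟩ := Set.ncard_eq_one.mp hK4
        have hpO : p ∈ O := by
          have : p ∈ K ∩ O := hp ▸ Set.mem_singleton p
          exact this.2
        have hKT : K = Tl p := hTu p hpO K hK1 hK2 hp
        exact ⟨p, ⟨hpO, hKT ▸ hK3⟩, hKT.symm⟩
      · rintro ⟨p, ⟨hpO, hyT⟩, rfl⟩
        obtain ⟨h1, h2, h3⟩ := hT1 p hpO
        refine ⟨⟨h1, h2, hyT⟩, ?_⟩
        rw [h3, Set.ncard_singleton]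
    have hinj : Set.InjOn Tl {p | p ∈ O ∧ y ∈ Tl p} := by
      intro p1 h1 p2 h2 heq
      have e1 := (hT1 p1 h1.1).2.2
      have e2 := (hT1 p2 h2.1).2.2
      rw [heq, e2] at e1
      exact (Set.singleton_eq_singleton_iff.mp e1).symm
    rw [tcount, himg, Set.ncard_image_of_injOn hinj, Set.ncard_eq_toFinset_card]
    congr 1
    ext p
    simp [hudef]
  -- double counting over the points of L off O
  set s := (Set.toFinite (L \ O)).toFinset with hsdef
  have hscard : s.card = q - 1 := by
    rw [hsdef, ← Set.ncard_eq_toFinset_card]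
    have h1 : L \ O = L \ (L ∩ O) := Set.diff_self_inter.symm
    rw [h1, Set.ncard_diff Set.inter_subset_left, hsec, G.line_card L hL]
    omega
  have hswap : ∑ y ∈ s, (u.filter (fun p => y ∈ Tl p)).card
      = ∑ p ∈ u, (s.filter (fun y => y ∈ Tl p)).card := by
    simp only [Finset.card_filter]
    exact Finset.sum_comm
  have hval : ∀ p ∈ u, (s.filter (fun y => y ∈ Tl p)).card
      = if p = a ∨ p = b then 0 else 1 := by
    intro p hpu
    rw [hudef, Set.Finite.mem_toFinset] at hpu
    by_cases hpab : p = a ∨ p = b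
    · rw [if_pos hpab]
      rw [Finset.card_eq_zero, Finset.filter_eq_empty_iff]
      intro y hys
      rw [hsdef, Set.Finite.mem_toFinset] at hys
      intro hyT
      have hpL : p ∈ L := by rcases hpab with rfl | rfl; exacts [haLO.1, hbLO.1]
      have hyp : y ≠ p := by rintro rfl; exact hys.2 hpu
      have hTL : Tl p = L := line_eq_of_two hπ (hT1 p hpu).1 (hT1 p hpu).2.1 hL hLπ hyp
        hyT (hpT p hpu) hys.1 hpL
      have : L ∩ O = {p} := hTL ▸ (hT1 p hpu).2.2
      rw [hLO] at this
      rcases hpab with rfl | rfl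
      · exact hab (by have : b ∈ ({p} : Set G.P) := this ▸ (by simp : b ∈ ({p, b} : Set G.P)); simpa using this.symm)
      · exact hab (by have : a ∈ ({p} : Set G.P) := this ▸ (by simp : a ∈ ({a, p} : Set G.P)); simpa using this)
    · rw [if_neg hpab]
      push_neg at hpab
      have hpL : p ∉ L := by
        intro h
        have : p ∈ L ∩ O := ⟨h, hpu⟩
        rw [hLO] at this
        rcases this with h | h
        exacts [hpab.1 h, hpab.2 h]
      have hTL : Tl p ≠ L := fun h => hpL (h ▸ hpT p hpu)
      obtain ⟨z, hz⟩ := lines_meet hπ (hT1 p hpu).1 (hT1 p hpu).2.1 hL hLπ hTL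
      have hzT : z ∈ Tl p := by have : z ∈ Tl p ∩ L := hz ▸ Set.mem_singleton z; exact this.1
      have hzL : z ∈ L := by have : z ∈ Tl p ∩ L := hz ▸ Set.mem_singleton z; exact this.2
      have hzO : z ∉ O := by
        intro h
        have : z ∈ Tl p ∩ O := ⟨hzT, h⟩
        rw [(hT1 p hpu).2.2] at this
        rw [Set.mem_singleton_iff] at this
        exact hpL (this ▸ hzL)
      rw [Finset.card_eq_one]
      refine ⟨z, ?_⟩
      ext y
      rw [Finset.mem_filter, Finset.mem_singleton, hsdef, Set.Finite.mem_toFinset]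
      constructor
      · rintro ⟨⟨hyL, hyO⟩, hyT⟩
        have : y ∈ Tl p ∩ L := ⟨hyT, hyL⟩
        rw [hz] at this
        exact this
      · rintro rfl
        exact ⟨⟨hzL, hzO⟩, hzT⟩
  have hucard : u.card = q + 1 := by
    rw [hudef, ← Set.ncard_eq_toFinset_card, hOcard]
  have habu : a ∈ u ∧ b ∈ u := by
    rw [hudef, Set.Finite.mem_toFinset, Set.Finite.mem_toFinset]
    exact ⟨haLO.2, hbLO.2⟩
  have htotal : ∑ p ∈ u, (s.filter (fun y => y ∈ Tl p)).card = q - 1 := by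
    rw [Finset.sum_congr rfl hval, Finset.sum_ite, Finset.sum_const, Finset.sum_const,
      smul_zero, smul_eq_mul, mul_one, zero_add]
    have hfab : u.filter (fun p => p = a ∨ p = b) = {a, b} := by
      ext p
      rw [Finset.mem_filter, Finset.mem_insert, Finset.mem_singleton]
      constructor
      · exact fun h => h.2
      · rintro (rfl | rfl)
        exacts [⟨habu.1, Or.inl rfl⟩, ⟨habu.2, Or.inr rfl⟩]
    have hsplit := Finset.card_filter_add_card_filter_not
      (s := u) (p := fun p => p = a ∨ p = b)
    rw [hfab, Finset.card_pair hab, hucard] at hsplit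
    omega
  have hsumtc : ∑ y ∈ s, G.tcount π O y = q - 1 := by
    rw [Finset.sum_congr rfl (fun y hy => hform y
      (by rw [hsdef, Set.Finite.mem_toFinset] at hy; exact hy.2)), hswap, htotal]
  have hxs : x ∈ s := by rw [hsdef, Set.Finite.mem_toFinset]; exact ⟨hx, hxO⟩
  have hge : ∀ y ∈ s, 1 ≤ G.tcount π O y := by
    intro y hy
    rw [hsdef, Set.Finite.mem_toFinset] at hy
    obtain ⟨m, hm⟩ := tangents_odd hq hπ ⟨hOπ, hOcard, harc⟩ (hLπ hy.1) hy.2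
    omega
  have hkey := Finset.add_sum_erase s (fun y => G.tcount π O y) hxs
  have herase : (s.erase x).card • 1 ≤ ∑ y ∈ s.erase x, G.tcount π O y :=
    Finset.card_nsmul_le_sum _ _ _ (fun y hy => hge y (Finset.mem_of_mem_erase hy))
  rw [Finset.card_erase_of_mem hxs, hscard] at herase
  obtain ⟨m, hm⟩ := tangents_odd hq hπ ⟨hOπ, hOcard, harc⟩ (hLπ hx) hxO
  simp only [smul_eq_mul, mul_one] at herase
  rw [hsumtc] at hkey
  omega

lemma kernel_exists [Finite G.P] (hq : Even q) (hq2 : 2 ≤ q) (hπ : π ∈ G.planes)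
    (hO : G.IsOval π O) : ∃ k, G.IsKernel π O k := by
  classical
  obtain ⟨hOπ, hOcard, harc⟩ := hO
  have h2O : ∃ a b, a ∈ O ∧ b ∈ O ∧ a ≠ b := by
    rw [← Set.one_lt_ncard_iff (Set.toFinite O), hOcard]; omega
  obtain ⟨a, b, haO, hbO, hab⟩ := h2O
  obtain ⟨Ta, ⟨hTa1, hTa2, hTa3⟩, -⟩ := tangent_exists_unique hπ ⟨hOπ, hOcard, harc⟩ haO
  obtain ⟨Tb, ⟨hTb1, hTb2, hTb3⟩, -⟩ := tangent_exists_unique hπ ⟨hOπ, hOcard, harc⟩ hbO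
  have hTab : Ta ≠ Tb := by
    intro h
    rw [h, hTb3] at hTa3
    exact hab (Set.singleton_eq_singleton_iff.mp hTa3).symm
  obtain ⟨N, hN⟩ := lines_meet hπ hTa1 hTa2 hTb1 hTb2 hTab
  have hNTa : N ∈ Ta := by have : N ∈ Ta ∩ Tb := hN ▸ Set.mem_singleton N; exact this.1
  have hNTb : N ∈ Tb := by have : N ∈ Ta ∩ Tb := hN ▸ Set.mem_singleton N; exact this.2
  have hNπ : N ∈ π := hTa2 hNTa
  have hNO : N ∉ O := by
    intro h
    have h1 : N ∈ Ta ∩ O := ⟨hNTa, h⟩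
    have h2 : N ∈ Tb ∩ O := ⟨hNTb, h⟩
    rw [hTa3, Set.mem_singleton_iff] at h1
    rw [hTb3, Set.mem_singleton_iff] at h2
    exact hab (h1 ▸ h2 ▸ rfl)
  -- N lies on at least two tangents
  have htc2 : 2 ≤ G.tcount π O N := by
    have hsub : {Ta, Tb} ⊆ {K | K ∈ G.pencil π N ∧ (K ∩ O).ncard = 1} := by
      rintro K (rfl | rfl)
      · exact ⟨⟨hTa1, hTa2, hNTa⟩, by rw [hTa3, Set.ncard_singleton]⟩
      · exact ⟨⟨hTb1, hTb2, hNTb⟩, by rw [hTb3, Set.ncard_singleton]⟩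
    calc 2 = ({Ta, Tb} : Set (Set G.P)).ncard := (Set.ncard_pair hTab).symm
    _ ≤ _ := Set.ncard_le_ncard hsub (Set.toFinite _)
  -- hence no secant through N
  have hnosec : ∀ M, M ∈ G.lines → M ⊆ π → N ∈ M → (M ∩ O).ncard ≤ 1 := by
    intro M hM hMπ hNM
    have := harc M hM hMπ
    by_contra h
    have hsec : (M ∩ O).ncard = 2 := by omega
    have := tcount_secant hq hq2 hπ ⟨hOπ, hOcard, harc⟩ hM hMπ hsec hNM hNO
    omega
  -- all q+1 lines through N are tangent
  refine ⟨N, hNπ, hNO, ?_⟩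
  intro M hM hMπ hNM
  set t := (Set.toFinite (G.pencil π N)).toFinset with htdef
  have htcard : t.card = q + 1 := by
    rw [htdef, ← Set.ncard_eq_toFinset_card]; exact pencil_ncard hπ hNπ
  have hsum : ∑ K ∈ t, (K ∩ O).ncard = q + 1 := by
    rw [sum_pencil hπ hNπ hOπ hNO, hOcard]
  have hle : ∀ K ∈ t, (K ∩ O).ncard ≤ 1 := by
    intro K hK
    rw [htdef, Set.Finite.mem_toFinset] at hK
    exact hnosec K hK.1 hK.2.1 hK.2.2
  have hMt : M ∈ t := by rw [htdef, Set.Finite.mem_toFinset]; exact ⟨hM, hMπ, hNM⟩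
  have hkey := Finset.add_sum_erase t (fun K => (K ∩ O).ncard) hMt
  have herase : ∑ K ∈ t.erase M, (K ∩ O).ncard ≤ (t.erase M).card • 1 :=
    Finset.sum_le_card_nsmul _ _ _ (fun K hK => hle K (Finset.mem_of_mem_erase hK))
  rw [Finset.card_erase_of_mem hMt, htcard] at herase
  simp only [smul_eq_mul, mul_one] at herase
  rw [hsum] at hkey
  have := hle M hMt
  omega

lemma kernel_unique [Finite G.P] (hq2 : 2 ≤ q) (hπ : π ∈ G.planes)
    (hO : G.IsOval π O) {k k' : G.P}
    (hk : G.IsKernel π O k) (hk' : G.IsKernel π O k') : k = k' := by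
  classical
  by_contra hne
  obtain ⟨hkπ, hkO, hktan⟩ := hk
  obtain ⟨hk'π, hk'O, hk'tan⟩ := hk'
  obtain ⟨Lkk, ⟨hL1, hL2, hL3, hL4⟩, hLu⟩ := line_thru hπ hkπ hk'π hne
  have hL1card : (Lkk ∩ O).ncard = 1 := hktan Lkk hL1 hL2 hL3
  obtain ⟨p0, hp0⟩ := Set.ncard_eq_one.mp hL1card
  have h2O : ∃ a b, a ∈ O ∧ b ∈ O ∧ a ≠ b := by
    rw [← Set.one_lt_ncard_iff (Set.toFinite O), hO.2.1]; omega
  obtain ⟨a, b, haO, hbO, hab⟩ := h2O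
  obtain ⟨p, hpO, hpp0⟩ : ∃ p, p ∈ O ∧ p ≠ p0 := by
    by_cases h : a = p0
    · exact ⟨b, hbO, fun hb => hab (h ▸ hb ▸ rfl)⟩
    · exact ⟨a, haO, h⟩
  have hpπ : p ∈ O := hpO
  -- the lines kp and k'p are both tangent at p, hence equal, hence equal to Lkk
  obtain ⟨M, ⟨hM1, hM2, hM3, hM4⟩, _⟩ := line_thru hπ hkπ (hO.1 hpO)
    (fun h => hkO (h ▸ hpO))
  obtain ⟨M', ⟨hM'1, hM'2, hM'3, hM'4⟩, _⟩ := line_thru hπ hk'π (hO.1 hpO)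
    (fun h => hk'O (h ▸ hpO))
  have hMO : M ∩ O = {p} := by
    obtain ⟨z, hz⟩ := Set.ncard_eq_one.mp (hktan M hM1 hM2 hM3)
    have : p ∈ M ∩ O := ⟨hM4, hpO⟩
    rw [hz] at this ⊢
    rw [Set.mem_singleton_iff] at this
    rw [this]
  have hM'O : M' ∩ O = {p} := by
    obtain ⟨z, hz⟩ := Set.ncard_eq_one.mp (hk'tan M' hM'1 hM'2 hM'3)
    have : p ∈ M' ∩ O := ⟨hM'4, hpO⟩
    rw [hz] at this ⊢
    rw [Set.mem_singleton_iff] at this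
    rw [this]
  obtain ⟨T, _, hTu⟩ := tangent_exists_unique hπ hO hpO
  have hMM' : M = M' := by rw [hTu M hM1 hM2 hMO, hTu M' hM'1 hM'2 hM'O]
  have hk'M : k' ∈ M := hMM' ▸ hM'3
  have hML : M = Lkk := hLu M hM1 hM2 hM3 hk'M
  have : p ∈ Lkk ∩ O := ⟨hML ▸ hM4, hpO⟩
  rw [hp0, Set.mem_singleton_iff] at this
  exact hpp0 this

end KleinGeom

/-- For a generalized quadratic set of type (SC) on `Q⁺(5,q)`, `q` even,
satisfying properties (1) and (2): no two points of `A₁ ∪ A₂` lie in a common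
plane, in particular no two are collinear, and `A₁ ∪ A₂` is an ovoid (it meets
every plane of the quadric in exactly one point). -/
theorem gqs_ovoid (q : ℕ) (hq : Even q) (hq2 : 2 ≤ q)
    (G : KleinGeom q) (X : Set G.P)
    (hX : G.IsGQS X) (h1 : G.Prop1 X) (h2 : G.Prop2 X) :
    (∀ π ∈ G.planes, ∀ x ∈ G.A1 X ∪ G.A2 X, ∀ y ∈ G.A1 X ∪ G.A2 X,
      x ∈ π → y ∈ π → x = y) ∧
    (∀ L ∈ G.lines, ∀ x ∈ G.A1 X ∪ G.A2 X, ∀ y ∈ G.A1 X ∪ G.A2 X,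
      x ∈ L → y ∈ L → x = y) ∧
    (∀ π ∈ G.planes, ((G.A1 X ∪ G.A2 X) ∩ π).ncard = 1) := by
  haveI := G.fin
  have part1 : ∀ π ∈ G.planes, ∀ x ∈ G.A1 X ∪ G.A2 X, ∀ y ∈ G.A1 X ∪ G.A2 X,
      x ∈ π → y ∈ π → x = y := by
    intro π hπ x hx y hy hxπ hyπ
    rcases hx with hx1 | hx2 <;> rcases hy with hy1 | hy2
    · obtain ⟨z, hz⟩ := Set.ncard_eq_one.mp (h1 π hπ x hx1 hxπ)
      have e1 : x ∈ X ∩ π := ⟨hx1.1, hxπ⟩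
      have e2 : y ∈ X ∩ π := ⟨hy1.1, hyπ⟩
      rw [hz, Set.mem_singleton_iff] at e1 e2
      rw [e1, e2]
    · exfalso
      have hS := h1 π hπ x hx1 hxπ
      have hC := ((h2 π hπ y hy2 hyπ).1).2.1
      omega
    · exfalso
      have hS := h1 π hπ y hy1 hyπ
      have hC := ((h2 π hπ x hx2 hxπ).1).2.1
      omega
    · have hx' := h2 π hπ x hx2 hxπ
      have hy' := h2 π hπ y hy2 hyπ
      exact KleinGeom.kernel_unique hq2 hπ hx'.1 hx'.2 hy'.2
  refine ⟨part1, ?_, ?_⟩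
  · intro L hL x hx y hy hxL hyL
    obtain ⟨π, hπ, hLπ⟩ := G.line_in_plane L hL
    exact part1 π hπ x hx y hy (hLπ hxL) (hLπ hyL)
  · intro π hπ
    have hexist : ∃ z, z ∈ G.A1 X ∪ G.A2 X ∧ z ∈ π := by
      rcases hX.1 π hπ with hS | hC
      · obtain ⟨z, hz⟩ := Set.ncard_eq_one.mp hS
        have hzX : z ∈ X ∩ π := by rw [hz]; exact Set.mem_singleton z
        exact ⟨z, Or.inl ⟨hzX.1, π, hπ, hzX.2, hS⟩, hzX.2⟩
      · obtain ⟨k, hk⟩ := KleinGeom.kernel_exists hq hq2 hπ hC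
        exact ⟨k, Or.inr ⟨π, hπ, hC, hk⟩, hk.1⟩
    obtain ⟨z, hzA, hzπ⟩ := hexist
    rw [Set.ncard_eq_one]
    refine ⟨z, ?_⟩
    ext w
    simp only [Set.mem_inter_iff, Set.mem_singleton_iff]
    constructor
    · rintro ⟨hwA, hwπ⟩
      exact part1 π hπ w hwA z hzA hwπ hzπ
    · rintro rfl
      exact ⟨hzA, hzπ⟩
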